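/- Let X be a real Hilbert space, F : X → ℝ twice continuously differentiable, z, x̂ ∈ X, L > 0 and γ ≥ 0. Suppose γ·Id ≤ ∇²F(ζ) ≤ L·Id for all ζ on the segment [x̂, z] = {x̂ + s(z − x̂) : s ∈ [0,1]}. Then for all β ∈ (0,1] and all x ∈ X: ⟨∇F(z) − ∇F(x̂), x − x̂⟩ ≥ γ(1 − β)‖x − x̂‖² − (L/(4β))‖x − z‖². -/

import Mathlib

open RealInnerProductSpace

private lemma quad_lower {X : Type*} [NormedAddCommGroup X] [InnerProductSpace ℝ X]
    (K : X →L[ℝ] X) (hs : ∀ v w : X, ⟪K v, w⟫ = ⟪K w, v⟫)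
    (γ L β : ℝ) (hγ : 0 ≤ γ) (hβ0 : 0 < β) (hβ1 : β ≤ 1)
    (hlow : ∀ h : X, γ * ‖h‖ ^ 2 ≤ ⟪K h, h⟫) (hup : ∀ h : X, ⟪K h, h⟫ ≤ L * ‖h‖ ^ 2)
    (a b : X) :
    γ * (1 - β) * ‖b‖ ^ 2 - L / (4 * β) * ‖a‖ ^ 2 ≤ ⟪K (b - a), b⟫ := by
  have hQ0 : ∀ w : X, (0:ℝ) ≤ ⟪K w, w⟫ := fun w => le_trans (by positivity) (hlow w)
  have hpos := hQ0 (b - (1/(2*β)) • a)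
  have hexp : ⟪K (b - (1/(2*β)) • a), b - (1/(2*β)) • a⟫
      = ⟪K b, b⟫ - (1/β) * ⟪K a, b⟫ + (1/(4*β^2)) * ⟪K a, a⟫ := by
    simp only [map_sub, map_smul, inner_sub_left, inner_sub_right,
      real_inner_smul_left, real_inner_smul_right]
    rw [hs b a]
    field_simp
    ring
  rw [hexp] at hpos
  have hb := mul_nonneg hβ0.le hpos
  have e : β * (⟪K b, b⟫ - (1/β) * ⟪K a, b⟫ + (1/(4*β^2)) * ⟪K a, a⟫)
      = β * ⟪K b, b⟫ - ⟪K a, b⟫ + 1/(4*β) * ⟪K a, a⟫ := by field_simp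
  rw [e] at hb
  have h1 : ⟪K a, b⟫ ≤ β * ⟪K b, b⟫ + 1/(4*β) * ⟪K a, a⟫ := by linarith
  have hKab : ⟪K (b - a), b⟫ = ⟪K b, b⟫ - ⟪K a, b⟫ := by
    rw [map_sub, inner_sub_left]
  rw [hKab]
  have e1 : 0 ≤ (1 - β) * (⟪K b, b⟫ - γ * ‖b‖ ^ 2) :=
    mul_nonneg (by linarith) (by linarith [hlow b])
  have e2 : 0 ≤ (1/(4*β)) * (L * ‖a‖ ^ 2 - ⟪K a, a⟫) :=
    mul_nonneg (by positivity) (by linarith [hup a])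
  have e3 : L / (4*β) = 1/(4*β) * L := by ring
  nlinarith [e1, e2, h1]

/-- Three-point monotonicity estimate under Hessian bounds on a segment. -/
theorem three_point_monotonicity {X : Type*} [NormedAddCommGroup X] [InnerProductSpace ℝ X]
    [CompleteSpace X]
    (F : X → ℝ) (g : X → X) (H : X → X →L[ℝ] X)
    (hF : ContDiff ℝ 2 F)
    (hg : ∀ ζ : X, HasGradientAt F (g ζ) ζ)
    (hH : ∀ ζ : X, HasFDerivAt g (H ζ) ζ)
    (z xs : X) (L γ : ℝ) (hL : 0 < L) (hγ : 0 ≤ γ)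
    (hbound : ∀ ζ ∈ segment ℝ xs z, ∀ h : X,
        γ * ‖h‖ ^ 2 ≤ ⟪H ζ h, h⟫ ∧ ⟪H ζ h, h⟫ ≤ L * ‖h‖ ^ 2)
    (β : ℝ) (hβ0 : 0 < β) (hβ1 : β ≤ 1) (x : X) :
    γ * (1 - β) * ‖x - xs‖ ^ 2 - L / (4 * β) * ‖x - z‖ ^ 2 ≤ ⟪g z - g xs, x - xs⟫ := by
  -- symmetry of the Hessian
  have hsymm : ∀ ζ v w : X, ⟪H ζ v, w⟫ = ⟪H ζ w, v⟫ := by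
    intro ζ v w
    let T : X →L[ℝ] (StrongDual ℝ X) :=
      (InnerProductSpace.toDual ℝ X).toLinearIsometry.toContinuousLinearMap
    have hf' : ∀ y : X, HasFDerivAt F (T (g y)) y := fun y => (hg y).hasFDerivAt
    have hf'' : HasFDerivAt (fun y => T (g y)) (T.comp (H ζ)) ζ := T.hasFDerivAt.comp ζ (hH ζ)
    have h := second_derivative_symmetric hf' hf'' v w
    exact h
  set c : ℝ := γ * (1 - β) * ‖x - xs‖ ^ 2 - L / (4 * β) * ‖x - z‖ ^ 2 with hc
  -- pointwise lower bound on the derivative along the segment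
  have key : ∀ ζ ∈ segment ℝ xs z, c ≤ ⟪H ζ (z - xs), x - xs⟫ := by
    intro ζ hζ
    have hdec : z - xs = (x - xs) - (x - z) := by abel
    rw [hdec]
    exact quad_lower (H ζ) (hsymm ζ) γ L β hγ hβ0 hβ1
      (fun h => (hbound ζ hζ h).1) (fun h => (hbound ζ hζ h).2) (x - z) (x - xs)
  -- the function along the segment
  set φ : ℝ → ℝ := fun t => ⟪g (xs + t • (z - xs)), x - xs⟫ - c * t with hφ
  have hφderiv : ∀ s : ℝ,
      HasDerivAt φ (⟪H (xs + s • (z - xs)) (z - xs), x - xs⟫ - c) s := by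
    intro s
    have h1 : HasDerivAt (fun t : ℝ => xs + t • (z - xs)) (z - xs) s := by
      simpa using ((hasDerivAt_id s).smul_const (z - xs)).const_add xs
    have h2 : HasDerivAt (fun t : ℝ => g (xs + t • (z - xs)))
        (H (xs + s • (z - xs)) (z - xs)) s := (hH _).comp_hasDerivAt s h1
    have h3 : HasDerivAt (fun t : ℝ => ⟪g (xs + t • (z - xs)), x - xs⟫)
        ⟪H (xs + s • (z - xs)) (z - xs), x - xs⟫ s := by
      simpa using h2.inner ℝ (hasDerivAt_const s (x - xs))
    have h4 : HasDerivAt (fun t : ℝ => c * t) c s := by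
      simpa using (hasDerivAt_id s).const_mul c
    exact h3.sub h4
  have hdiffφ : Differentiable ℝ φ := fun s => (hφderiv s).differentiableAt
  have hmono : MonotoneOn φ (Set.Icc (0:ℝ) 1) := by
    apply monotoneOn_of_deriv_nonneg (convex_Icc 0 1) hdiffφ.continuous.continuousOn
      (hdiffφ.differentiableOn)
    intro s hs
    rw [interior_Icc] at hs
    rw [(hφderiv s).deriv]
    have hseg : xs + s • (z - xs) ∈ segment ℝ xs z := by
      rw [segment_eq_image']
      exact ⟨s, ⟨hs.1.le, hs.2.le⟩, rfl⟩
    linarith [key _ hseg]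
  have h01 : φ 0 ≤ φ 1 := hmono (by norm_num) (by norm_num) zero_le_one
  have hφ0 : φ 0 = ⟪g xs, x - xs⟫ := by simp [hφ]
  have hφ1 : φ 1 = ⟪g z, x - xs⟫ - c := by simp [hφ]
  rw [hφ0, hφ1] at h01
  rw [inner_sub_left]
  linarith
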